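/- (Stationary Gibbs measure of Wasserstein Fokker–Planck) Consider the PDE ∂_t P = Π(ρ)^{1/2} ∇_ρ·{Π(ρ)^{-1/2} L(ρ)(P d_ρF(ρ) + β d_ρP)} on a compact subset of the interior of the probability simplex with zero-flux boundary conditions, where Π(ρ) is the product of positive eigenvalues of L(ρ) and β>0. Then P*(ρ) = (1/K) e^{−F(ρ)/β}, with K = ∫ Π(ρ)^{-1/2} e^{−F(ρ)/β} dvol, is a stationary solution: the flux L(ρ)(P* d_ρF + β d_ρP*) vanishes identically. -/

import Mathlib

open Matrix

/-- Discrete gradient matrix `D ∈ ℝ^{|E|×n}` with entries `±√ω_{ij}`. -/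
noncomputable def gradMat {n : ℕ} {E : Type} (sE tE : E → Fin n) (w : E → ℝ) :
    Matrix E (Fin n) ℝ :=
  fun e k => if k = sE e then Real.sqrt (w e) else if k = tE e then -Real.sqrt (w e) else 0

/-- Weighted graph Laplacian `L(a) = Dᵀ Θ(a) D` with `Θ(a)` diagonal with entries
`(a_i + a_j)/2` on edges. -/
noncomputable def Lw {n : ℕ} {E : Type} [Fintype E] [DecidableEq E] (sE tE : E → Fin n) (w : E → ℝ)
    (a : Fin n → ℝ) : Matrix (Fin n) (Fin n) ℝ :=
  (gradMat sE tE w)ᵀ * Matrix.diagonal (fun e => (a (sE e) + a (tE e)) / 2) * gradMat sE tE w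

/-- `B` is the Moore–Penrose pseudoinverse of `A` (the four Penrose conditions). -/
def IsPInv {n : ℕ} (A B : Matrix (Fin n) (Fin n) ℝ) : Prop :=
  A * B * A = A ∧ B * A * B = B ∧ (A * B)ᵀ = A * B ∧ (B * A)ᵀ = B * A

/-- Vertex-wise circle product of the gradient fields of two potentials:
`(∇_GΦ ∘ ∇_GΨ)_i = (1/2)·Σ_{j ∈ N(i)} ω_{ij}(Φ_i − Φ_j)(Ψ_i − Ψ_j)`. -/
noncomputable def circ {n : ℕ} {E : Type} [Fintype E] (sE tE : E → Fin n) (w : E → ℝ)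
    (Φ Ψ : Fin n → ℝ) : Fin n → ℝ :=
  fun i => (1 / 2) *
    ∑ e : E, (if sE e = i ∨ tE e = i then
      w e * (Φ (sE e) - Φ (tE e)) * (Ψ (sE e) - Ψ (tE e)) else 0)

/-- The normalized all-ones vector `u₀ = (1/√n)(1,…,1)ᵀ`. -/
noncomputable def onesVec (n : ℕ) : Fin n → ℝ := fun _ => 1 / Real.sqrt n

/-- Stationary Gibbs measure of the Wasserstein Fokker–Planck equation:
the Gibbs density `P*(ρ) = (1/K) e^{−F(ρ)/β}` has Euclidean gradient
`d_ρP* = −(1/β) P* d_ρF`, so the flux `L(ρ)(P* d_ρF + β d_ρP*)` vanishes identically;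
hence `P*` is a stationary solution of
`∂_t P = Π^{1/2}∇_ρ·{Π^{-1/2}L(ρ)(P d_ρF + β d_ρP)}`. -/
theorem gibbs_stationary_wasserstein_fokker_planck
    {n : ℕ} {E : Type} [Fintype E] [DecidableEq E]
    (sE tE : E → Fin n) (w : E → ℝ)
    (hw : ∀ e, 0 < w e)
    (hconn : ∀ Φ : Fin n → ℝ, (∀ e, Φ (sE e) = Φ (tE e)) → ∀ i j, Φ i = Φ j)
    (B : Set (Fin n → ℝ)) (hBcomp : IsCompact B)
    (hBsub : ∀ μ ∈ B, (∀ i, 0 < μ i) ∧ ∑ i, μ i = 1)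
    (β : ℝ) (hβ : 0 < β)
    (F : (Fin n → ℝ) → ℝ) (hF : ContDiff ℝ 1 F)
    (dF : (Fin n → ℝ) → Fin n → ℝ)
    -- dF is the Euclidean gradient of F
    (hdF : ∀ μ : Fin n → ℝ, ∀ i : Fin n,
      HasDerivAt (fun s => F (Function.update μ i s)) (dF μ i) (μ i))
    -- the normalizing constant K = ∫_B Π^{-1/2} e^{−F/β} dvol
    (K : ℝ) (hK : 0 < K) :
    ∀ μ ∈ B,
      (∀ i : Fin n,
        HasDerivAt (fun s => (1 / K) * Real.exp (-(F (Function.update μ i s)) / β))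
          (-(1 / β) * ((1 / K) * Real.exp (-(F μ) / β)) * dF μ i) (μ i)) ∧
      Lw sE tE w μ *ᵥ (fun i =>
        ((1 / K) * Real.exp (-(F μ) / β)) * dF μ i +
          β * (-(1 / β) * ((1 / K) * Real.exp (-(F μ) / β)) * dF μ i)) = 0 := by
  intro μ hμ
  constructor
  · intro i
    have h1 : HasDerivAt (fun s => -(F (Function.update μ i s)) / β)
        (-(dF μ i) / β) (μ i) := ((hdF μ i).neg).div_const β
    have h2 := (h1.exp).const_mul (1 / K)
    convert h2 using 1
    · rfl
    · rfl
    simp [Function.update_self]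
    ring
  · have : (fun i =>
        ((1 / K) * Real.exp (-(F μ) / β)) * dF μ i +
          β * (-(1 / β) * ((1 / K) * Real.exp (-(F μ) / β)) * dF μ i)) = 0 := by
      funext i
      field_simp
      simp
    rw [this, Matrix.mulVec_zero]
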